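/- Let P: [0,∞) → ℝ be continuous, and let U, V, W, Q: [0,∞) × ℝ → ℝ be C¹ in t and 1-periodic in ξ, with V, W, Q satisfying V_t = −2UW + 2WVP(t), W_t = 2UV − U − 2V²P(t) + VP(t), Q_t = −2WQP(t). Assume in addition that for each t the map ξ ↦ U(t,ξ) is locally absolutely continuous with ∂_ξU(t,ξ) = W(t,ξ)Q(t,ξ) for a.e. ξ. Then the quantity Ẽ(t) := ∫₀¹ (Q − QV)(t,ξ) dξ is constant in time. -/

import Mathlib

open MeasureTheory Filter Set

noncomputable section

private lemma aux_contx {F : ℝ → ℝ → ℝ}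
    (hF : ContinuousOn (Function.uncurry F) (Set.Ici (0:ℝ) ×ˢ Set.univ))
    {t : ℝ} (ht : 0 ≤ t) : Continuous fun ξ => F t ξ := by
  rw [← continuousOn_univ]
  exact hF.comp (continuous_const.prodMk continuous_id).continuousOn
    (fun ξ _ => ⟨ht, trivial⟩)

private lemma aux_contt {F : ℝ → ℝ → ℝ}
    (hF : ContinuousOn (Function.uncurry F) (Set.Ici (0:ℝ) ×ˢ Set.univ))
    (ξ : ℝ) : ContinuousOn (fun t => F t ξ) (Set.Ici (0:ℝ)) :=
  hF.comp (continuous_id.prodMk continuous_const).continuousOn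
    (fun t htt => ⟨htt, trivial⟩)

/-- **Conservation of the energy of the semilinear characteristic system.** Let `P` be
continuous on `[0,∞)` and let `U, V, W, Q` be `C¹` in `t` (jointly continuous, with the
stated `t`-derivatives) and 1-periodic in `ξ`, satisfying `V_t = −2UW + 2WVP`,
`W_t = 2UV − U − 2V²P + VP`, `Q_t = −2WQP`. If moreover `ξ ↦ U(t,ξ)` is locally
absolutely continuous with `∂_ξ U = WQ` a.e., then `Ẽ(t) = ∫₀¹ (Q − QV)(t,ξ) dξ` is
constant in time. -/
theorem semilinear_energy_conserved
    (P : ℝ → ℝ) (U V W Q : ℝ → ℝ → ℝ)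
    (hP : ContinuousOn P (Set.Ici (0:ℝ)))
    (hUc : ContinuousOn (Function.uncurry U) (Set.Ici (0:ℝ) ×ˢ Set.univ))
    (hVc : ContinuousOn (Function.uncurry V) (Set.Ici (0:ℝ) ×ˢ Set.univ))
    (hWc : ContinuousOn (Function.uncurry W) (Set.Ici (0:ℝ) ×ˢ Set.univ))
    (hQc : ContinuousOn (Function.uncurry Q) (Set.Ici (0:ℝ) ×ˢ Set.univ))
    (hUper : ∀ t ξ : ℝ, U t (ξ + 1) = U t ξ)
    (hVper : ∀ t ξ : ℝ, V t (ξ + 1) = V t ξ)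
    (hWper : ∀ t ξ : ℝ, W t (ξ + 1) = W t ξ)
    (hQper : ∀ t ξ : ℝ, Q t (ξ + 1) = Q t ξ)
    (hVode : ∀ ξ : ℝ, ∀ t : ℝ, 0 ≤ t → HasDerivWithinAt (fun s => V s ξ)
      (-2 * U t ξ * W t ξ + 2 * W t ξ * V t ξ * P t) (Set.Ici (0:ℝ)) t)
    (hWode : ∀ ξ : ℝ, ∀ t : ℝ, 0 ≤ t → HasDerivWithinAt (fun s => W s ξ)
      (2 * U t ξ * V t ξ - U t ξ - 2 * (V t ξ) ^ 2 * P t + V t ξ * P t)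
      (Set.Ici (0:ℝ)) t)
    (hQode : ∀ ξ : ℝ, ∀ t : ℝ, 0 ≤ t → HasDerivWithinAt (fun s => Q s ξ)
      (-2 * W t ξ * Q t ξ * P t) (Set.Ici (0:ℝ)) t)
    (hUAC : ∀ t : ℝ, 0 ≤ t → ∀ a b : ℝ,
      U t b - U t a = ∫ ξ in a..b, W t ξ * Q t ξ) :
    ∀ t₁ t₂ : ℝ, 0 ≤ t₁ → 0 ≤ t₂ →
      (∫ ξ in (0:ℝ)..1, (Q t₁ ξ - Q t₁ ξ * V t₁ ξ))
        = ∫ ξ in (0:ℝ)..1, (Q t₂ ξ - Q t₂ ξ * V t₂ ξ) := by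
  -- the ξ-derivative of U is W*Q, everywhere, by FTC
  have hUderiv : ∀ t : ℝ, 0 ≤ t → ∀ ξ : ℝ,
      HasDerivAt (fun x => U t x) (W t ξ * Q t ξ) ξ := by
    intro t ht ξ
    have hc : Continuous fun x => W t x * Q t x :=
      (aux_contx hWc ht).mul (aux_contx hQc ht)
    have h1 : HasDerivAt (fun x => U t 0 + ∫ s in (0:ℝ)..x, W t s * Q t s)
        (W t ξ * Q t ξ) ξ := by
      have := intervalIntegral.integral_hasDerivAt_right
        (hc.intervalIntegrable 0 ξ)
        (hc.stronglyMeasurableAtFilter volume (nhds ξ)) hc.continuousAt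
      exact this.const_add _
    have heq : (fun x => U t x) = fun x => U t 0 + ∫ s in (0:ℝ)..x, W t s * Q t s := by
      funext x
      have := hUAC t ht 0 x
      linarith
    rw [heq]
    exact h1
  -- the spatial integral of the putative time derivative vanishes
  have hinner : ∀ t : ℝ, 0 ≤ t →
      (∫ ξ in (0:ℝ)..1, 2 * W t ξ * Q t ξ * (U t ξ - P t)) = 0 := by
    intro t ht
    have hU10 : U t 1 = U t 0 := by simpa using hUper t 0
    have hWQ0 : (∫ ξ in (0:ℝ)..1, W t ξ * Q t ξ) = 0 := by
      have := hUAC t ht 0 1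
      rw [← this, hU10]; ring
    have hcWQ : Continuous fun ξ => W t ξ * Q t ξ :=
      (aux_contx hWc ht).mul (aux_contx hQc ht)
    have hcU : Continuous fun ξ => U t ξ := aux_contx hUc ht
    have hsq : (∫ ξ in (0:ℝ)..1, 2 * U t ξ * (W t ξ * Q t ξ)) = 0 := by
      have hder : ∀ ξ ∈ Set.uIcc (0:ℝ) 1,
          HasDerivAt (fun x => (U t x) ^ 2) (2 * U t ξ * (W t ξ * Q t ξ)) ξ := by
        intro ξ _
        have : HasDerivAt (fun x => (U t x) ^ 2) _ ξ := (hUderiv t ht ξ).pow 2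
        convert this using 1
        push_cast
        ring
      have hci : Continuous fun ξ => 2 * U t ξ * (W t ξ * Q t ξ) :=
        ((continuous_const.mul hcU).mul hcWQ)
      have := intervalIntegral.integral_eq_sub_of_hasDerivAt hder
        (hci.intervalIntegrable 0 1)
      rw [this, hU10]; ring
    have hre : (fun ξ => 2 * W t ξ * Q t ξ * (U t ξ - P t))
        = fun ξ => 2 * U t ξ * (W t ξ * Q t ξ) - (2 * P t) * (W t ξ * Q t ξ) := by
      funext ξ; ring
    rw [hre, intervalIntegral.integral_sub (f := fun ξ => 2 * U t ξ * (W t ξ * Q t ξ))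
        (g := fun ξ => 2 * P t * (W t ξ * Q t ξ))
        (((continuous_const.mul hcU).mul hcWQ).intervalIntegrable 0 1)
        ((continuous_const.mul hcWQ).intervalIntegrable 0 1),
      hsq, intervalIntegral.integral_const_mul, hWQ0]
    ring
  -- time derivative of the energy density
  have hg' : ∀ ξ t : ℝ, 0 ≤ t → HasDerivWithinAt (fun s => Q s ξ - Q s ξ * V s ξ)
      (2 * W t ξ * Q t ξ * (U t ξ - P t)) (Set.Ici (0:ℝ)) t := by
    intro ξ t ht
    have : HasDerivWithinAt (fun s => Q s ξ - Q s ξ * V s ξ) _ (Set.Ici (0:ℝ)) t := (hQode ξ t ht).sub ((hQode ξ t ht).mul (hVode ξ t ht))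
    convert this using 1
    ring
  -- continuity in t of density and derivative
  have hgc : ∀ ξ : ℝ, ContinuousOn (fun t => Q t ξ - Q t ξ * V t ξ) (Set.Ici (0:ℝ)) :=
    fun ξ => (aux_contt hQc ξ).sub ((aux_contt hQc ξ).mul (aux_contt hVc ξ))
  have hhc : ∀ ξ : ℝ, ContinuousOn (fun t => 2 * W t ξ * Q t ξ * (U t ξ - P t))
      (Set.Ici (0:ℝ)) := fun ξ =>
    ((continuousOn_const.mul (aux_contt hWc ξ)).mul (aux_contt hQc ξ)).mul
      ((aux_contt hUc ξ).sub hP)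
  -- FTC in time
  have hFTC : ∀ t₁ t₂ : ℝ, 0 ≤ t₁ → 0 ≤ t₂ → ∀ ξ : ℝ,
      (∫ t in t₁..t₂, 2 * W t ξ * Q t ξ * (U t ξ - P t))
        = (Q t₂ ξ - Q t₂ ξ * V t₂ ξ) - (Q t₁ ξ - Q t₁ ξ * V t₁ ξ) := by
    intro t₁ t₂ ht₁ ht₂ ξ
    have hsub : Set.uIcc t₁ t₂ ⊆ Set.Ici (0:ℝ) :=
      fun x hx => le_trans (le_min ht₁ ht₂) hx.1
    refine intervalIntegral.integral_eq_sub_of_hasDeriv_right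
      ((hgc ξ).mono hsub) ?_ (((hhc ξ).mono hsub).intervalIntegrable)
    intro x hx
    have hx0 : 0 < x := lt_of_le_of_lt (le_min ht₁ ht₂) hx.1
    exact ((hg' ξ x hx0.le).hasDerivAt (Ici_mem_nhds hx0)).hasDerivWithinAt
  -- main statement for ordered times
  have key : ∀ t₁ t₂ : ℝ, 0 ≤ t₁ → 0 ≤ t₂ → t₁ ≤ t₂ →
      (∫ ξ in (0:ℝ)..1, (Q t₁ ξ - Q t₁ ξ * V t₁ ξ))
        = ∫ ξ in (0:ℝ)..1, (Q t₂ ξ - Q t₂ ξ * V t₂ ξ) := by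
    intro t₁ t₂ ht₁ ht₂ hle
    have hi : ∀ t : ℝ, 0 ≤ t → IntervalIntegrable
        (fun ξ => Q t ξ - Q t ξ * V t ξ) volume 0 1 := fun t ht =>
      (((aux_contx hQc ht).sub ((aux_contx hQc ht).mul (aux_contx hVc ht))).intervalIntegrable 0 1)
    have hdiff : (∫ ξ in (0:ℝ)..1, (Q t₂ ξ - Q t₂ ξ * V t₂ ξ))
        - (∫ ξ in (0:ℝ)..1, (Q t₁ ξ - Q t₁ ξ * V t₁ ξ))
        = ∫ ξ in (0:ℝ)..1, ((Q t₂ ξ - Q t₂ ξ * V t₂ ξ) - (Q t₁ ξ - Q t₁ ξ * V t₁ ξ)) :=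
      (intervalIntegral.integral_sub (hi t₂ ht₂) (hi t₁ ht₁)).symm
    have hzero : (∫ ξ in (0:ℝ)..1,
        ((Q t₂ ξ - Q t₂ ξ * V t₂ ξ) - (Q t₁ ξ - Q t₁ ξ * V t₁ ξ))) = 0 := by
      have hstep1 : (∫ ξ in (0:ℝ)..1,
          ((Q t₂ ξ - Q t₂ ξ * V t₂ ξ) - (Q t₁ ξ - Q t₁ ξ * V t₁ ξ)))
          = ∫ ξ in (0:ℝ)..1, ∫ t in t₁..t₂, 2 * W t ξ * Q t ξ * (U t ξ - P t) := by
        apply intervalIntegral.integral_congr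
        intro ξ _
        exact (hFTC t₁ t₂ ht₁ ht₂ ξ).symm
      rw [hstep1]
      -- convert to set integrals and swap by Fubini
      have hIntProd : Integrable
          (Function.uncurry fun ξ t => 2 * W t ξ * Q t ξ * (U t ξ - P t))
          ((volume.restrict (Set.Ioc (0:ℝ) 1)).prod (volume.restrict (Set.Ioc t₁ t₂))) := by
        rw [Measure.prod_restrict]
        have hcont : ContinuousOn
            (Function.uncurry fun ξ t => 2 * W t ξ * Q t ξ * (U t ξ - P t))
            (Set.Icc (0:ℝ) 1 ×ˢ Set.Icc t₁ t₂) := by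
          have hmap : Set.MapsTo (fun p : ℝ × ℝ => (p.2, p.1))
              (Set.Icc (0:ℝ) 1 ×ˢ Set.Icc t₁ t₂) (Set.Ici (0:ℝ) ×ˢ Set.univ) :=
            fun p hp => ⟨le_trans ht₁ hp.2.1, trivial⟩
          have cswap : ContinuousOn (fun p : ℝ × ℝ => (p.2, p.1))
              (Set.Icc (0:ℝ) 1 ×ˢ Set.Icc t₁ t₂) :=
            (continuous_snd.prodMk continuous_fst).continuousOn
          have cW := hWc.comp cswap hmap
          have cQ := hQc.comp cswap hmap
          have cU := hUc.comp cswap hmap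
          have cP : ContinuousOn (fun p : ℝ × ℝ => P p.2)
              (Set.Icc (0:ℝ) 1 ×ˢ Set.Icc t₁ t₂) :=
            hP.comp continuous_snd.continuousOn (fun p hp => le_trans ht₁ hp.2.1)
          exact ((continuousOn_const.mul cW).mul cQ).mul (cU.sub cP)
        exact (hcont.integrableOn_compact (isCompact_Icc.prod isCompact_Icc)).mono_set
          (Set.prod_mono Set.Ioc_subset_Icc_self Set.Ioc_subset_Icc_self)
      rw [intervalIntegral.integral_of_le (zero_le_one : (0:ℝ) ≤ 1)]
      have hswap := MeasureTheory.integral_integral_swap hIntProd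
      calc (∫ ξ in Set.Ioc (0:ℝ) 1, ∫ t in t₁..t₂, 2 * W t ξ * Q t ξ * (U t ξ - P t))
          = ∫ ξ in Set.Ioc (0:ℝ) 1, ∫ t in Set.Ioc t₁ t₂,
              2 * W t ξ * Q t ξ * (U t ξ - P t) := by
            apply setIntegral_congr_fun measurableSet_Ioc
            intro ξ _
            exact intervalIntegral.integral_of_le hle
        _ = ∫ t in Set.Ioc t₁ t₂, ∫ ξ in Set.Ioc (0:ℝ) 1,
              2 * W t ξ * Q t ξ * (U t ξ - P t) := hswap
        _ = ∫ t in Set.Ioc t₁ t₂, (0:ℝ) := by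
            apply setIntegral_congr_fun measurableSet_Ioc
            intro t htm
            have ht0 : 0 ≤ t := le_trans ht₁ htm.1.le
            show (∫ ξ in Set.Ioc (0:ℝ) 1, 2 * W t ξ * Q t ξ * (U t ξ - P t)) = 0
            rw [← intervalIntegral.integral_of_le (zero_le_one : (0:ℝ) ≤ 1)]
            exact hinner t ht0
        _ = 0 := by simp
    linarith [hdiff, hzero]
  intro t₁ t₂ ht₁ ht₂
  rcases le_total t₁ t₂ with h | h
  · exact key t₁ t₂ ht₁ ht₂ h
  · exact (key t₂ t₁ ht₂ ht₁ h).symm
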